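/- Let (A, μ, α, β) be a BiHom-alternative algebra, k, l, s, t ∈ ℕ, θ an α^kβ^l-quasi-centroid and θ' an α^sβ^t-quasi-centroid of A. Then the commutator [θ,θ'] = θ∘θ' − θ'∘θ is an α^{k+s}β^{l+t}-quasi-derivation of A; explicitly, [θ,θ'] commutes with α and β and satisfies [θ,θ'](x)·α^{k+s}β^{l+t}(y) + α^{k+s}β^{l+t}(x)·[θ,θ'](y) = 0 for all x, y ∈ A (so D' = 0 works). -/
import Mathlib


/-- The BiHom-associator `as_{α,β}(x,y,z) = (xy)β(z) − α(x)(yz)`. -/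
def biAssoc {A : Type*} [AddCommGroup A] (mul : A → A → A) (α β : A → A)
    (x y z : A) : A :=
  mul (mul x y) (β z) - mul (α x) (mul y z)

/-- A BiHom-algebra `(A, μ, α, β)`. -/
structure IsBiHomAlg (K : Type*) {A : Type*} [Field K] [AddCommGroup A] [Module K A]
    (mul : A → A → A) (α β : A → A) : Prop where
  mul_lin_left : ∀ y, IsLinearMap K fun x => mul x y
  mul_lin_right : ∀ x, IsLinearMap K (mul x)
  alpha_lin : IsLinearMap K α
  beta_lin : IsLinearMap K β
  alpha_beta_comm : ∀ x, α (β x) = β (α x)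
  alpha_mul : ∀ x y, α (mul x y) = mul (α x) (α y)
  beta_mul : ∀ x y, β (mul x y) = mul (β x) (β y)

/-- A BiHom-alternative algebra. -/
structure IsBiHomAlt (K : Type*) {A : Type*} [Field K] [AddCommGroup A] [Module K A]
    (mul : A → A → A) (α β : A → A) extends IsBiHomAlg K mul α β : Prop where
  left_alt : ∀ x y z,
    biAssoc mul α β (β x) (α y) z + biAssoc mul α β (β y) (α x) z = 0
  right_alt : ∀ x y z,
    biAssoc mul α β x (β y) (α z) + biAssoc mul α β x (β z) (α y) = 0

/-- An `α^k β^l`-derivation of `(A, μ, α, β)`. -/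
structure IsDerivation (K : Type*) {A : Type*} [Field K] [AddCommGroup A] [Module K A]
    (mul : A → A → A) (α β : A → A) (k l : ℕ) (D : A → A) : Prop where
  lin : IsLinearMap K D
  comm_a : ∀ x, D (α x) = α (D x)
  comm_b : ∀ x, D (β x) = β (D x)
  der : ∀ x y, D (mul x y)
      = mul (D x) (α^[k] (β^[l] y)) + mul (α^[k] (β^[l] x)) (D y)

/-- An `α^k β^l`-centroid of `(A, μ, α, β)`. -/
structure IsCentroid (K : Type*) {A : Type*} [Field K] [AddCommGroup A] [Module K A]
    (mul : A → A → A) (α β : A → A) (k l : ℕ) (θ : A → A) : Prop where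
  lin : IsLinearMap K θ
  comm_a : ∀ x, θ (α x) = α (θ x)
  comm_b : ∀ x, θ (β x) = β (θ x)
  cent_l : ∀ x y, θ (mul x y) = mul (θ x) (α^[k] (β^[l] y))
  cent_r : ∀ x y, θ (mul x y) = mul (α^[k] (β^[l] x)) (θ y)

/-- An `α^k β^l`-quasi-centroid of `(A, μ, α, β)`. -/
structure IsQuasiCentroid (K : Type*) {A : Type*} [Field K] [AddCommGroup A] [Module K A]
    (mul : A → A → A) (α β : A → A) (k l : ℕ) (θ : A → A) : Prop where
  lin : IsLinearMap K θ
  comm_a : ∀ x, θ (α x) = α (θ x)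
  comm_b : ∀ x, θ (β x) = β (θ x)
  qc : ∀ x y, mul (θ x) (α^[k] (β^[l] y)) = mul (α^[k] (β^[l] x)) (θ y)

/-- An `α^k β^l`-quasi-derivation of `(A, μ, α, β)`. -/
def IsQuasiDerivation (K : Type*) {A : Type*} [Field K] [AddCommGroup A] [Module K A]
    (mul : A → A → A) (α β : A → A) (k l : ℕ) (D : A → A) : Prop :=
  IsLinearMap K D ∧ (∀ x, D (α x) = α (D x)) ∧ (∀ x, D (β x) = β (D x)) ∧
    ∃ D' : A → A, IsLinearMap K D' ∧ (∀ x, D' (α x) = α (D' x)) ∧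
      (∀ x, D' (β x) = β (D' x)) ∧
      ∀ x y, D' (mul x y)
        = mul (D x) (α^[k] (β^[l] y)) + mul (α^[k] (β^[l] x)) (D y)

/-- An `α^k β^l`-generalized derivation of `(A, μ, α, β)` with associated maps
`D'` and `D''`. -/
structure IsGenDerivation (K : Type*) {A : Type*} [Field K] [AddCommGroup A] [Module K A]
    (mul : A → A → A) (α β : A → A) (k l : ℕ) (D D' D'' : A → A) : Prop where
  lin : IsLinearMap K D
  lin' : IsLinearMap K D'
  lin'' : IsLinearMap K D''
  comm_a : ∀ x, D (α x) = α (D x)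
  comm_b : ∀ x, D (β x) = β (D x)
  comm_a' : ∀ x, D' (α x) = α (D' x)
  comm_b' : ∀ x, D' (β x) = β (D' x)
  comm_a'' : ∀ x, D'' (α x) = α (D'' x)
  comm_b'' : ∀ x, D'' (β x) = β (D'' x)
  gen : ∀ x y, D'' (mul x y)
      = mul (D x) (α^[k] (β^[l] y)) + mul (α^[k] (β^[l] x)) (D' y)


private lemma iter_comm' {A : Type*} {f g : A → A} (h : ∀ x, f (g x) = g (f x)) :
    ∀ (n : ℕ) (x : A), f (g^[n] x) = g^[n] (f x) := by
  intro n
  induction n with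
  | zero => intro x; rfl
  | succ n ih =>
    intro x
    rw [Function.iterate_succ_apply, ih, h, ← Function.iterate_succ_apply]

/-- If `θ` is an `α^k β^l`-quasi-centroid and `θ'` an `α^s β^t`-quasi-centroid
of a BiHom-alternative algebra, then `[θ,θ'] = θ∘θ' − θ'∘θ` is an
`α^{k+s} β^{l+t}`-quasi-derivation; explicitly
`[θ,θ'](x)·α^{k+s}β^{l+t}(y) + α^{k+s}β^{l+t}(x)·[θ,θ'](y) = 0`. -/
theorem commutator_quasiCentroids_isQuasiDerivation
    (K : Type*) [Field K] [CharZero K] {A : Type*} [AddCommGroup A] [Module K A]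
    (mul : A → A → A) (α β : A → A) (halg : IsBiHomAlt K mul α β)
    (k l s t : ℕ) (θ θ' : A → A)
    (hθ : IsQuasiCentroid K mul α β k l θ) (hθ' : IsQuasiCentroid K mul α β s t θ') :
    IsQuasiDerivation K mul α β (k + s) (l + t) (fun x => θ (θ' x) - θ' (θ x)) ∧
    (∀ x, (θ (θ' (α x)) - θ' (θ (α x))) = α (θ (θ' x) - θ' (θ x))) ∧
    (∀ x, (θ (θ' (β x)) - θ' (θ (β x))) = β (θ (θ' x) - θ' (θ x))) ∧
    (∀ x y, mul (θ (θ' x) - θ' (θ x)) (α^[k + s] (β^[l + t] y))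
        + mul (α^[k + s] (β^[l + t] x)) (θ (θ' y) - θ' (θ y)) = 0) := by
  have hab := halg.alpha_beta_comm
  -- rearrangement of iterates
  have hM : ∀ y, α^[k + s] (β^[l + t] y) = α^[k] (β^[l] (α^[s] (β^[t] y))) := by
    intro y
    have h1 : ∀ x, α (β^[l] x) = β^[l] (α x) := fun x => iter_comm' hab l x
    have h2 : ∀ x, β^[l] (α^[s] x) = α^[s] (β^[l] x) :=
      fun x => iter_comm' (fun z => (h1 z).symm) s x
    rw [Function.iterate_add_apply, Function.iterate_add_apply, h2]
  have hθa := fun n x => iter_comm' hθ.comm_a n x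
  have hθb := fun n x => iter_comm' hθ.comm_b n x
  have hθ'a := fun n x => iter_comm' hθ'.comm_a n x
  have hθ'b := fun n x => iter_comm' hθ'.comm_b n x
  have hM' : ∀ y, α^[k + s] (β^[l + t] y) = α^[s] (β^[t] (α^[k] (β^[l] y))) := by
    intro y
    have h1 : ∀ x, α (β^[t] x) = β^[t] (α x) := fun x => iter_comm' hab t x
    have h2 : ∀ x, β^[t] (α^[k] x) = α^[k] (β^[t] x) :=
      fun x => iter_comm' (fun z => (h1 z).symm) k x
    rw [add_comm k s, add_comm l t, Function.iterate_add_apply,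
      Function.iterate_add_apply, h2]
  -- key identity: θ(θ'x)·M y = M x · θ'(θ y)
  have key : ∀ x y, mul (θ (θ' x)) (α^[k + s] (β^[l + t] y))
      = mul (α^[k + s] (β^[l + t] x)) (θ' (θ y)) := by
    intro x y
    rw [hM, hθ.qc (θ' x), hθa, hθb, ← hθ'b, ← hθ'a, hθ'.qc, ← hM']
  have key' : ∀ x y, mul (θ' (θ x)) (α^[k + s] (β^[l + t] y))
      = mul (α^[k + s] (β^[l + t] x)) (θ (θ' y)) := by
    intro x y
    rw [hM', hθ'.qc (θ x), hθ'a, hθ'b, ← hθb, ← hθa, hθ.qc, ← hM]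
  have hlin : IsLinearMap K (fun x => θ (θ' x) - θ' (θ x)) := by
    constructor
    · intro a b
      simp only [hθ'.lin.map_add, hθ.lin.map_add]
      abel
    · intro c a
      simp only [hθ'.lin.map_smul, hθ.lin.map_smul, smul_sub]
  have hca : ∀ x, (θ (θ' (α x)) - θ' (θ (α x))) = α (θ (θ' x) - θ' (θ x)) := by
    intro x
    rw [hθ'.comm_a, hθ.comm_a, hθ.comm_a, hθ'.comm_a, halg.alpha_lin.map_sub]
  have hcb : ∀ x, (θ (θ' (β x)) - θ' (θ (β x))) = β (θ (θ' x) - θ' (θ x)) := by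
    intro x
    rw [hθ'.comm_b, hθ.comm_b, hθ.comm_b, hθ'.comm_b, halg.beta_lin.map_sub]
  have hzero : ∀ x y, mul (θ (θ' x) - θ' (θ x)) (α^[k + s] (β^[l + t] y))
      + mul (α^[k + s] (β^[l + t] x)) (θ (θ' y) - θ' (θ y)) = 0 := by
    intro x y
    rw [(halg.mul_lin_left _).map_sub, (halg.mul_lin_right _).map_sub, key, key']
    abel
  refine ⟨⟨hlin, hca, hcb, 0, ?_, fun _ => halg.alpha_lin.map_zero.symm, fun _ => halg.beta_lin.map_zero.symm, ?_⟩, hca, hcb, hzero⟩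
  · exact ⟨fun _ _ => (add_zero (0 : A)).symm, fun c _ => (smul_zero c).symm⟩
  · intro x y
    exact (hzero x y).symm
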